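/- With LN defined as LN(x) = γ ⊙ ((x − x̄𝟙)/s(x)) + β where s(x) = √((1/d)‖x − x̄𝟙‖² + ε) and ε > 0, if ‖γ‖_∞ ≤ γ_max, then the operator norm of the Jacobian of LN at any x ∈ ℝ^d is at most 2γ_max/s(x). -/

import Mathlib

/-- Centering: `(P x)_i = x_i − x̄` with `x̄ = (1/d)∑ⱼ xⱼ`. -/
noncomputable def lnP (d : ℕ) (x : Fin d → ℝ) : Fin d → ℝ :=
  fun i => x i - (∑ j, x j) / d

/-- `s(x) = √((1/d)‖Px‖² + ε)`. -/
noncomputable def lnS (d : ℕ) (ε : ℝ) (x : Fin d → ℝ) : ℝ :=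
  Real.sqrt ((∑ i, (lnP d x i) ^ 2) / d + ε)

/-- LayerNorm: `LN(x) = γ ⊙ (Px/s(x)) + β`, viewed as a map of Euclidean spaces. -/
noncomputable def layerNorm (d : ℕ) (ε : ℝ) (γ β : Fin d → ℝ) :
    EuclideanSpace ℝ (Fin d) → EuclideanSpace ℝ (Fin d) :=
  fun x => WithLp.toLp 2 (fun i => γ i * (lnP d x i / lnS d ε x) + β i)


noncomputable def lnPC (d : ℕ) : EuclideanSpace ℝ (Fin d) →L[ℝ] EuclideanSpace ℝ (Fin d) :=
  LinearMap.toContinuousLinearMap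
    { toFun := fun h => WithLp.toLp 2 (lnP d h)
      map_add' := by
        intro a b; ext i
        simp [lnP, Finset.sum_add_distrib, add_div]
        ring
      map_smul' := by
        intro c a; ext i
        simp [lnP, Finset.mul_sum]
        rw [← Finset.mul_sum]
        ring }

noncomputable def diagCLM (d : ℕ) (γ : Fin d → ℝ) :
    EuclideanSpace ℝ (Fin d) →L[ℝ] EuclideanSpace ℝ (Fin d) :=
  LinearMap.toContinuousLinearMap
    { toFun := fun h => WithLp.toLp 2 (fun i => γ i * h i)
      map_add' := by intro a b; ext i; simp; ring
      map_smul' := by intro c a; ext i; simp; ring }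

lemma lnP_sum_sq_le (d : ℕ) (h : Fin d → ℝ) :
    ∑ i, (lnP d h i) ^ 2 ≤ ∑ i, (h i) ^ 2 := by
  rcases Nat.eq_zero_or_pos d with hd | hd
  · subst hd; simp
  have hdR : (d : ℝ) ≠ 0 := Nat.cast_ne_zero.2 hd.ne'
  set m : ℝ := (∑ j, h j) / d with hm
  have hsum : ∑ j, h j = d * m := by rw [hm]; field_simp
  have key : ∑ i, (lnP d h i) ^ 2 = (∑ i, (h i) ^ 2) - d * m ^ 2 := by
    simp only [lnP, ← hm, sub_sq]
    rw [Finset.sum_add_distrib, Finset.sum_sub_distrib, ← Finset.sum_mul, ← Finset.mul_sum, hsum]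
    simp [Finset.card_univ]
    ring
  rw [key]
  nlinarith [sq_nonneg m, (by exact_mod_cast hd : (0:ℝ) < d)]

lemma lnPC_opNorm_le (d : ℕ) : ‖lnPC d‖ ≤ 1 := by
  refine ContinuousLinearMap.opNorm_le_bound _ zero_le_one fun h => ?_
  rw [one_mul]
  have h1 : ‖lnPC d h‖ = Real.sqrt (∑ i, (lnP d h i) ^ 2) := by
    rw [EuclideanSpace.norm_eq]
    congr 1
    apply Finset.sum_congr rfl
    intro i _
    show ‖lnP d h i‖ ^ 2 = _
    rw [Real.norm_eq_abs, sq_abs]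
  have h2 : ‖h‖ = Real.sqrt (∑ i, (h i) ^ 2) := by
    rw [EuclideanSpace.norm_eq]
    congr 1
    exact Finset.sum_congr rfl fun i _ => by rw [Real.norm_eq_abs, sq_abs]
  rw [h1, h2]
  exact Real.sqrt_le_sqrt (lnP_sum_sq_le d h)

lemma diagCLM_opNorm_le (d : ℕ) (γ : Fin d → ℝ) (γmax : ℝ) (hγ0 : 0 ≤ γmax)
    (hγ : ∀ i, |γ i| ≤ γmax) : ‖diagCLM d γ‖ ≤ γmax := by
  refine ContinuousLinearMap.opNorm_le_bound _ hγ0 fun h => ?_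
  have h1 : ‖diagCLM d γ h‖ = Real.sqrt (∑ i, (γ i * h i) ^ 2) := by
    rw [EuclideanSpace.norm_eq]
    congr 1
    exact Finset.sum_congr rfl fun i _ => by show ‖γ i * h i‖ ^ 2 = _; rw [Real.norm_eq_abs, sq_abs]
  have h2 : ‖h‖ = Real.sqrt (∑ i, (h i) ^ 2) := by
    rw [EuclideanSpace.norm_eq]
    congr 1
    exact Finset.sum_congr rfl fun i _ => by rw [Real.norm_eq_abs, sq_abs]
  rw [h1, h2, ← Real.sqrt_sq hγ0, ← Real.sqrt_mul (sq_nonneg _)]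
  apply Real.sqrt_le_sqrt
  rw [Finset.mul_sum]
  apply Finset.sum_le_sum
  intro i _
  nlinarith [sq_nonneg (h i), sq_abs (γ i), mul_le_mul (hγ i) (hγ i) (abs_nonneg _) hγ0]

lemma lnP_sum (d : ℕ) (hd : 0 < d) (x : Fin d → ℝ) : ∑ j, lnP d x j = 0 := by
  have hdR : (d : ℝ) ≠ 0 := Nat.cast_ne_zero.2 hd.ne'
  simp only [lnP, Finset.sum_sub_distrib, Finset.sum_const, Finset.card_univ, Fintype.card_fin,
    nsmul_eq_mul]
  field_simp
  ring

lemma lnP_inner (d : ℕ) (hd : 0 < d) (x h : Fin d → ℝ) :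
    ∑ j, lnP d x j * lnP d h j = ∑ j, lnP d x j * h j := by
  have : ∀ j, lnP d x j * lnP d h j = lnP d x j * h j - ((∑ k, h k)/d) * lnP d x j := by
    intro j; simp only [lnP]; ring
  simp only [this, Finset.sum_sub_distrib, ← Finset.mul_sum, lnP_sum d hd x, mul_zero, sub_zero]

noncomputable def lnPE (d : ℕ) (x : Fin d → ℝ) : EuclideanSpace ℝ (Fin d) := WithLp.toLp 2 (lnP d x)

noncomputable def lnL (d : ℕ) (ε : ℝ) (γ : Fin d → ℝ) (x : EuclideanSpace ℝ (Fin d)) :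
    EuclideanSpace ℝ (Fin d) →L[ℝ] EuclideanSpace ℝ (Fin d) :=
  (diagCLM d γ).comp ((lnS d ε x)⁻¹ • lnPC d -
    ((d : ℝ) * (lnS d ε x) ^ 3)⁻¹ •
      ((innerSL ℝ (lnPE d x)).smulRight (lnPE d x)))

lemma layerNorm_hasFDerivAt (d : ℕ) (hd : 0 < d) (ε : ℝ) (hε : 0 < ε) (γ β : Fin d → ℝ)
    (x : EuclideanSpace ℝ (Fin d)) :
    HasFDerivAt (layerNorm d ε γ β) (lnL d ε γ x) x := by
  have hdR : (d : ℝ) ≠ 0 := Nat.cast_ne_zero.2 hd.ne'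
  have harg : 0 < (∑ i, lnP d x i ^ 2) / d + ε := by positivity
  have ht0 : 0 < Real.sqrt ((∑ i, lnP d x i ^ 2) / d + ε) := Real.sqrt_pos.2 harg
  set ℓ : Fin d → (EuclideanSpace ℝ (Fin d) →L[ℝ] ℝ) :=
    fun i => (EuclideanSpace.proj i).comp (lnPC d) with hℓ
  have hQ : HasFDerivAt (fun y : EuclideanSpace ℝ (Fin d) => ∑ j, lnP d y j ^ 2)
      (∑ j, (2 * lnP d x j) • ℓ j) x := by
    refine HasFDerivAt.fun_sum fun j _ => ?_
    have h1 : HasFDerivAt (fun y : EuclideanSpace ℝ (Fin d) => lnP d y j * lnP d y j)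
        (lnP d x j • ℓ j + lnP d x j • ℓ j) x := (ℓ j).hasFDerivAt.mul (ℓ j).hasFDerivAt
    have h2 : (fun y : EuclideanSpace ℝ (Fin d) => lnP d y j ^ 2)
        = fun y : EuclideanSpace ℝ (Fin d) => lnP d y j * lnP d y j := by
      funext y; rw [pow_two]
    rw [h2, show (2 * lnP d x j) • ℓ j = lnP d x j • ℓ j + lnP d x j • ℓ j by
      rw [two_mul, add_smul]]
    exact h1
  have hg : HasFDerivAt (fun y : EuclideanSpace ℝ (Fin d) => (∑ j, lnP d y j ^ 2) / d + ε)
      ((d : ℝ)⁻¹ • ∑ j, (2 * lnP d x j) • ℓ j) x := by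
    simp only [div_eq_mul_inv]
    exact (hQ.mul_const _).add_const ε
  have hsq := hg.sqrt (ne_of_gt harg)
  have hinv := (hasDerivAt_inv (ne_of_gt ht0)).comp_hasFDerivAt x hsq
  rw [← (PiLp.continuousLinearEquiv 2 ℝ (fun _ : Fin d => ℝ)).comp_hasFDerivAt_iff]
  apply hasFDerivAt_pi''
  intro i
  show HasFDerivAt (fun y : EuclideanSpace ℝ (Fin d) => γ i * (lnP d y i / lnS d ε y) + β i) _ x
  have hmain := (((ℓ i).hasFDerivAt.mul hinv).const_mul (γ i)).add_const (β i)
  have hfun : (fun y : EuclideanSpace ℝ (Fin d) => γ i * (lnP d y i / lnS d ε y) + β i)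
      = fun y : EuclideanSpace ℝ (Fin d) =>
          γ i * (ℓ i y * (Real.sqrt ((∑ j, lnP d y j ^ 2) / d + ε))⁻¹) + β i := by
    funext y; rw [div_eq_mul_inv]; rfl
  rw [hfun]
  refine hmain.congr_fderiv (Eq.symm ?_)
  ext h
  have hs2 : Real.sqrt ((∑ i, lnP d x i ^ 2) / d + ε) ^ 2 = (∑ i, lnP d x i ^ 2) / d + ε :=
    Real.sq_sqrt harg.le
  simp only [lnL, lnS, ContinuousLinearMap.coe_comp', Function.comp_apply,
    ContinuousLinearMap.sub_apply, ContinuousLinearMap.smul_apply,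
    ContinuousLinearMap.smulRight_apply, innerSL_apply_apply, ContinuousLinearMap.add_apply,
    ContinuousLinearMap.proj_apply, ContinuousLinearEquiv.coe_coe,
    PiLp.continuousLinearEquiv_apply, ContinuousLinearMap.coe_sum',
    Finset.sum_apply, smul_eq_mul]
  have hℓa : ∀ (y : EuclideanSpace ℝ (Fin d)) (j : Fin d), ℓ j y = lnP d y j :=
    fun y j => rfl
  have hinner : (inner ℝ (lnPE d x) h : ℝ) = ∑ j, lnP d x j * h j := by
    simp [lnPE, PiLp.inner_apply, RCLike.inner_apply, conj_trivial]
    exact Finset.sum_congr rfl fun j _ => mul_comm _ _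
  have hsum : ∑ j, 2 * lnP d x j * lnP d h j = 2 * ∑ j, lnP d x j * h j := by
    rw [← lnP_inner d hd x h, Finset.mul_sum]
    exact Finset.sum_congr rfl fun j _ => by ring
  simp only [hℓa]
  rw [show (WithLp.ofLp
      ((diagCLM d γ)
        ((√((∑ i : Fin d, lnP d x i ^ 2) / ↑d + ε))⁻¹ • (lnPC d) h -
          (↑d * √((∑ i : Fin d, lnP d x i ^ 2) / ↑d + ε) ^ 3)⁻¹ •
            (inner ℝ (lnPE d x) h : ℝ) • lnPE d x))
      i) = γ i * ((√((∑ i : Fin d, lnP d x i ^ 2) / ↑d + ε))⁻¹ * lnP d h i -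
          (↑d * √((∑ i : Fin d, lnP d x i ^ 2) / ↑d + ε) ^ 3)⁻¹ *
            ((inner ℝ (lnPE d x) h : ℝ) * lnP d x i)) from rfl]
  rw [hinner, hsum]
  set t := √((∑ i : Fin d, lnP d x i ^ 2) / ↑d + ε) with hts
  field_simp
  ring

set_option maxHeartbeats 1000000 in
set_option synthInstance.maxHeartbeats 400000 in
/-- If `‖γ‖_∞ ≤ γ_max`, the operator norm of the LayerNorm Jacobian is at most
`2γ_max/s(x)`. -/
theorem layerNorm_jacobian_opNorm_le (d : ℕ) (hd : 0 < d) (ε : ℝ) (hε : 0 < ε)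
    (γ β : Fin d → ℝ) (γmax : ℝ) (hγ : ∀ i, |γ i| ≤ γmax)
    (x : EuclideanSpace ℝ (Fin d)) :
    ‖fderiv ℝ (layerNorm d ε γ β) x‖ ≤ 2 * γmax / lnS d ε x := by
  have hγ0 : 0 ≤ γmax := le_trans (abs_nonneg _) (hγ ⟨0, hd⟩)
  have hdR : (0:ℝ) < d := Nat.cast_pos.2 hd
  have harg : 0 < (∑ i, lnP d x i ^ 2) / d + ε := by positivity
  have hs0 : 0 < lnS d ε x := Real.sqrt_pos.2 harg
  rw [(layerNorm_hasFDerivAt d hd ε hε γ β x).fderiv]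
  set s := lnS d ε x with hs
  have hs2 : s ^ 2 = (∑ i, lnP d x i ^ 2) / d + ε := Real.sq_sqrt harg.le
  have hpx : ‖lnPE d x‖ * ‖lnPE d x‖ ≤ d * s ^ 2 := by
    have h1 : ‖lnPE d x‖ = Real.sqrt (∑ i, lnP d x i ^ 2) := by
      rw [EuclideanSpace.norm_eq]
      congr 1
      exact Finset.sum_congr rfl fun i _ => by
        show ‖lnP d x i‖ ^ 2 = _; rw [Real.norm_eq_abs, sq_abs]
    have h2 : (0:ℝ) ≤ ∑ i, lnP d x i ^ 2 := by positivity
    rw [h1, Real.mul_self_sqrt h2, hs2, mul_add, mul_div_cancel₀ _ hdR.ne']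
    nlinarith [mul_pos hdR hε]
  have hA : ‖(s⁻¹ • lnPC d - ((d : ℝ) * s ^ 3)⁻¹ •
      ((innerSL ℝ (lnPE d x)).smulRight (lnPE d x)))‖ ≤ 2 / s := by
    have hb1 : ‖s⁻¹ • lnPC d‖ ≤ s⁻¹ := by
      calc ‖s⁻¹ • lnPC d‖ ≤ ‖s⁻¹‖ * ‖lnPC d‖ := ContinuousLinearMap.opNorm_smul_le _ _
        _ = s⁻¹ * ‖lnPC d‖ := by rw [Real.norm_eq_abs, abs_of_pos (inv_pos.2 hs0)]
        _ ≤ s⁻¹ * 1 := mul_le_mul_of_nonneg_left (lnPC_opNorm_le d) (inv_pos.2 hs0).le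
        _ = s⁻¹ := mul_one _
    have hb2 : ‖((d : ℝ) * s ^ 3)⁻¹ • ((innerSL ℝ (lnPE d x)).smulRight (lnPE d x))‖ ≤ s⁻¹ := by
      have hR : ‖(innerSL ℝ (lnPE d x)).smulRight (lnPE d x)‖ = ‖lnPE d x‖ * ‖lnPE d x‖ := by
        rw [ContinuousLinearMap.norm_smulRight_apply, innerSL_apply_norm]
      have hc : (0:ℝ) < (d : ℝ) * s ^ 3 := by positivity
      calc ‖((d : ℝ) * s ^ 3)⁻¹ • ((innerSL ℝ (lnPE d x)).smulRight (lnPE d x))‖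
          ≤ ‖((d : ℝ) * s ^ 3)⁻¹‖ * ‖(innerSL ℝ (lnPE d x)).smulRight (lnPE d x)‖ :=
            ContinuousLinearMap.opNorm_smul_le _ _
        _ = ((d : ℝ) * s ^ 3)⁻¹ * (‖lnPE d x‖ * ‖lnPE d x‖) := by
            rw [Real.norm_eq_abs, abs_of_pos (inv_pos.2 hc), hR]
        _
          ≤ ((d : ℝ) * s ^ 3)⁻¹ * ((d : ℝ) * s ^ 2) :=
            mul_le_mul_of_nonneg_left hpx (inv_pos.2 hc).le
        _ = s⁻¹ := by field_simp
    calc ‖(s⁻¹ • lnPC d - ((d : ℝ) * s ^ 3)⁻¹ •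
          ((innerSL ℝ (lnPE d x)).smulRight (lnPE d x)))‖
        ≤ ‖s⁻¹ • lnPC d‖ + ‖((d : ℝ) * s ^ 3)⁻¹ •
          ((innerSL ℝ (lnPE d x)).smulRight (lnPE d x))‖ := norm_sub_le _ _
      _ ≤ s⁻¹ + s⁻¹ := add_le_add hb1 hb2
      _ = 2 / s := by rw [div_eq_mul_inv]; ring
  calc ‖lnL d ε γ x‖ ≤ ‖diagCLM d γ‖ * ‖(s⁻¹ • lnPC d - ((d : ℝ) * s ^ 3)⁻¹ •
        ((innerSL ℝ (lnPE d x)).smulRight (lnPE d x)))‖ := ContinuousLinearMap.opNorm_comp_le _ _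
    _ ≤ γmax * (2 / s) :=
        mul_le_mul (diagCLM_opNorm_le d γ γmax hγ0 hγ) hA (norm_nonneg _) hγ0
    _ = 2 * γmax / s := by ring
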